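/- Consider the scalar SCLP with G = 1, α > 0, a > 0, γ < 0, c > 0 and time horizon T > −γ/c. Then the supremum of the SCLP objective equals α(γ + cT) + acT²/2 + aγ(T + γ/(2c)), and this supremum is attained by the M-CLP extension (via a control with an impulse at 0) but is not attained by any SCLP solution (absolutely continuous control). -/

import Mathlib

open Set MeasureTheory

/-- Attainable objective values of the scalar SCLP (absolutely continuous
controls u). -/
def sclpValues (α a γ c T : ℝ) : Set ℝ :=
  {z | ∃ u : ℝ → ℝ, IntegrableOn u (Icc 0 T) ∧ (∀ t ∈ Icc (0:ℝ) T, 0 ≤ u t) ∧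
    (∀ t ∈ Icc (0:ℝ) T, (∫ s in (0:ℝ)..t, u s) ≤ α + a * t) ∧
    z = ∫ t in (0:ℝ)..T, (γ + (T - t) * c) * u t}

/-- Attainable objective values of the M-CLP extension (cumulative controls:
nonnegative, nondecreasing, right-continuous U with U(0-)=0, U(t) ≤ α+at). -/
def mclpValues (α a γ c T : ℝ) : Set ℝ :=
  {z | ∃ U : StieltjesFunction ℝ, (∀ t < (0:ℝ), U t = 0) ∧
    (∀ t ∈ Icc (0:ℝ) T, U t ≤ α + a * t) ∧
    z = ∫ t in Icc (0:ℝ) T, (γ + (T - t) * c) ∂U.measure}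

lemma sclp_integral_linear (A B p q : ℝ) (h : p ≤ q) :
    ∫ t in Ioc p q, (A - B * t) = A*(q-p) - B*(q^2-p^2)/2 := by
  rw [← intervalIntegral.integral_of_le h,
    intervalIntegral.integral_sub intervalIntegrable_const
      ((intervalIntegral.intervalIntegrable_id).const_mul B),
    intervalIntegral.integral_const, intervalIntegral.integral_const_mul,
    integral_id, smul_eq_mul]
  ring

lemma sclp_fubini_sm {g : ℝ → ℝ} {b : ℝ} (hgsm : StronglyMeasurable g)
    (hg : IntegrableOn g (Ioc 0 b)) :
    ∫ t in Ioc (0:ℝ) b, (b - t) * g t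
      = ∫ s in Ioc (0:ℝ) b, (∫ t in Ioc (0:ℝ) s, g t) := by
  set ν := volume.restrict (Ioc (0:ℝ) b) with hν
  have hFsm : StronglyMeasurable (Function.uncurry fun s t => (Ioc (0:ℝ) s).indicator g t) := by
    have : (Function.uncurry fun s t => (Ioc (0:ℝ) s).indicator g t)
        = Set.indicator {p : ℝ × ℝ | 0 < p.2 ∧ p.2 ≤ p.1} (fun p => g p.2) := by
      ext p
      by_cases h : p.2 ∈ Ioc (0:ℝ) p.1
      · simp only [Function.uncurry, Set.indicator_of_mem h]
        rw [Set.indicator_of_mem]; exact h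
      · simp only [Function.uncurry, Set.indicator_of_notMem h]
        rw [Set.indicator_of_notMem]; exact h
    rw [this]
    exact (hgsm.comp_measurable measurable_snd).indicator
      ((measurableSet_lt measurable_const measurable_snd).inter
        (measurableSet_le measurable_snd measurable_fst))
  have hFint : Integrable (Function.uncurry fun s t => (Ioc (0:ℝ) s).indicator g t) (ν.prod ν) := by
    rw [integrable_prod_iff hFsm.aestronglyMeasurable]
    constructor
    · exact Filter.Eventually.of_forall fun s => hg.indicator measurableSet_Ioc
    · refine (integrable_const (∫ t, ‖g t‖ ∂ν)).mono'
        (hFsm.norm.aestronglyMeasurable.integral_prod_right') ?_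
      refine Filter.Eventually.of_forall fun s => ?_
      rw [Real.norm_of_nonneg (integral_nonneg fun t => norm_nonneg _)]
      refine integral_mono ((hg.indicator measurableSet_Ioc).norm) hg.norm fun t => ?_
      exact norm_indicator_le_norm_self g t
  have swap := integral_integral_swap hFint
  have hL : ∫ s in Ioc (0:ℝ) b, ∫ t, (Ioc (0:ℝ) s).indicator g t ∂ν
      = ∫ s in Ioc (0:ℝ) b, (∫ t in Ioc (0:ℝ) s, g t) := by
    refine setIntegral_congr_fun measurableSet_Ioc fun s hs => ?_
    rw [hν, integral_indicator measurableSet_Ioc, Measure.restrict_restrict measurableSet_Ioc,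
      Set.inter_eq_left.mpr (Ioc_subset_Ioc le_rfl hs.2)]
  have hR : ∫ t in Ioc (0:ℝ) b, ∫ s, (Ioc (0:ℝ) s).indicator g t ∂ν
      = ∫ t in Ioc (0:ℝ) b, (b - t) * g t := by
    refine setIntegral_congr_fun measurableSet_Ioc fun t ht => ?_
    have h1 : (fun s => (Ioc (0:ℝ) s).indicator g t) = (Ici t).indicator (fun _ => g t) := by
      ext s
      by_cases h : t ≤ s
      · rw [Set.indicator_of_mem (mem_Ioc.mpr ⟨ht.1, h⟩), Set.indicator_of_mem (mem_Ici.mpr h)]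
      · rw [Set.indicator_of_notMem (fun hm => h hm.2),
          Set.indicator_of_notMem (by simpa using h)]
    rw [h1, integral_indicator_const _ measurableSet_Ici, hν,
      measureReal_restrict_apply measurableSet_Ici]
    have h2 : Ici t ∩ Ioc 0 b = Icc t b := by
      ext s
      simp only [mem_inter_iff, mem_Ici, mem_Ioc, mem_Icc]
      exact ⟨fun ⟨h1', h2'⟩ => ⟨h1', h2'.2⟩, fun ⟨h1', h2'⟩ => ⟨h1', ht.1.trans_le h1', h2'⟩⟩
    rw [h2, Real.volume_real_Icc_of_le (by linarith [ht.2] : t ≤ b),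
      smul_eq_mul]
  rw [← hL, ← hR]
  exact swap.symm

lemma sclp_fubini {u : ℝ → ℝ} {b : ℝ} (hu : IntegrableOn u (Ioc 0 b)) :
    ∫ t in Ioc (0:ℝ) b, (b - t) * u t
      = ∫ s in Ioc (0:ℝ) b, (∫ t in Ioc (0:ℝ) s, u t) := by
  set g := hu.1.mk u with hg
  have hug : u =ᵐ[volume.restrict (Ioc (0:ℝ) b)] g := hu.1.ae_eq_mk
  have hgi : IntegrableOn g (Ioc 0 b) := hu.congr_fun_ae hug
  calc ∫ t in Ioc (0:ℝ) b, (b - t) * u t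
      = ∫ t in Ioc (0:ℝ) b, (b - t) * g t := by
        refine integral_congr_ae (hug.mono fun t h => ?_)
        simp only []
        rw [h]
    _ = ∫ s in Ioc (0:ℝ) b, (∫ t in Ioc (0:ℝ) s, g t) :=
        sclp_fubini_sm hu.1.stronglyMeasurable_mk hgi
    _ = ∫ s in Ioc (0:ℝ) b, (∫ t in Ioc (0:ℝ) s, u t) := by
        refine setIntegral_congr_fun measurableSet_Ioc fun s hs => ?_
        refine integral_congr_ae ?_
        exact (ae_restrict_of_ae_restrict_of_subset (Ioc_subset_Ioc le_rfl hs.2) hug.symm)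

lemma sclp_mul_int {u : ℝ → ℝ} {T τ : ℝ} (hτ0 : 0 < τ) (hτT : τ ≤ T)
    (hui : IntegrableOn u (Icc 0 T)) :
    IntegrableOn (fun t => (τ - t) * u t) (Icc 0 T) := by
  refine Integrable.mono' (hui.norm.const_mul (|τ| + |T|))
    (((continuous_const.sub continuous_id).aestronglyMeasurable.restrict).mul hui.1) ?_
  rw [ae_restrict_iff' measurableSet_Icc]
  refine Filter.Eventually.of_forall fun t ht => ?_
  have h1 : |τ - t| ≤ |τ| + |T| := by
    have h2 : |t| ≤ |T| := by
      rw [abs_of_nonneg ht.1, abs_of_nonneg (ht.1.trans ht.2)]; exact ht.2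
    calc |τ - t| ≤ |τ| + |t| := abs_sub τ t
      _ ≤ |τ| + |T| := by linarith
  calc ‖(τ - t) * u t‖ = |τ - t| * ‖u t‖ := by rw [norm_mul]; rfl
    _ ≤ (|τ| + |T|) * ‖u t‖ := by
        exact mul_le_mul_of_nonneg_right h1 (norm_nonneg _)

lemma sclp_bound {u : ℝ → ℝ} {γ c T τ : ℝ} (hc : 0 < c) (hτ : τ = T + γ/c)
    (hτ0 : 0 < τ) (hτT : τ ≤ T)
    (hui : IntegrableOn u (Icc 0 T)) (hu0 : ∀ t ∈ Icc (0:ℝ) T, 0 ≤ u t) :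
    (∫ t in (0:ℝ)..T, (γ + (T - t) * c) * u t)
      ≤ c * ∫ s in Ioc (0:ℝ) τ, (∫ t in Ioc (0:ℝ) s, u t) := by
  have hT0 : (0:ℝ) ≤ T := hτ0.le.trans hτT
  have hvu := sclp_mul_int hτ0 hτT hui
  have hI1 : IntegrableOn (fun t => (τ - t) * u t) (Ioc 0 τ) :=
    hvu.mono_set (fun x hx => ⟨hx.1.le, hx.2.trans hτT⟩)
  have hI2 : IntegrableOn (fun t => (τ - t) * u t) (Ioc τ T) :=
    hvu.mono_set (fun x hx => ⟨hτ0.le.trans hx.1.le, hx.2⟩)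
  have hrw : ∫ t in (0:ℝ)..T, (γ + (T - t) * c) * u t
      = c * ∫ t in Ioc (0:ℝ) T, (τ - t) * u t := by
    rw [intervalIntegral.integral_of_le hT0, ← integral_const_mul]
    refine integral_congr_ae (Filter.Eventually.of_forall fun t => ?_)
    have hcoef : γ + (T - t) * c = c * (T + γ / c - t) := by
      field_simp; ring
    show (γ + (T - t) * c) * u t = c * ((τ - t) * u t)
    rw [hτ, hcoef, mul_assoc]
  have hsplit : ∫ t in Ioc (0:ℝ) T, (τ - t) * u t
      = (∫ t in Ioc (0:ℝ) τ, (τ - t) * u t) + ∫ t in Ioc τ T, (τ - t) * u t := by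
    rw [← Ioc_union_Ioc_eq_Ioc hτ0.le hτT,
      setIntegral_union (Ioc_disjoint_Ioc_of_le le_rfl) measurableSet_Ioc hI1 hI2]
  have hneg : (∫ t in Ioc τ T, (τ - t) * u t) ≤ 0 := by
    refine setIntegral_nonpos measurableSet_Ioc fun t ht => ?_
    exact mul_nonpos_of_nonpos_of_nonneg (by linarith [ht.1])
      (hu0 t ⟨hτ0.le.trans ht.1.le, ht.2⟩)
  have hfub : (∫ t in Ioc (0:ℝ) τ, (τ - t) * u t)
      = ∫ s in Ioc (0:ℝ) τ, (∫ t in Ioc (0:ℝ) s, u t) :=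
    sclp_fubini (hui.mono_set (fun x hx => ⟨hx.1.le, hx.2.trans hτT⟩))
  rw [hrw, hsplit, hfub]
  have := mul_le_mul_of_nonneg_left
    (add_le_of_nonpos_right (a := ∫ s in Ioc (0:ℝ) τ, (∫ t in Ioc (0:ℝ) s, u t)) hneg) hc.le
  linarith [this]

lemma sclp_prim_int {u : ℝ → ℝ} {T τ : ℝ} (hτ0 : 0 < τ) (hτT : τ ≤ T)
    (hui : IntegrableOn u (Icc 0 T)) :
    IntegrableOn (fun s => ∫ t in Ioc (0:ℝ) s, u t) (Ioc 0 τ) := by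
  have hcont : ContinuousOn (fun s => ∫ t in Ioc (0:ℝ) s, u t) (Icc 0 τ) :=
    intervalIntegral.continuousOn_primitive (hui.mono_set (Icc_subset_Icc le_rfl hτT))
  exact (hcont.integrableOn_compact isCompact_Icc).mono_set Ioc_subset_Icc_self

lemma sclp_prim_bound {u : ℝ → ℝ} {α a T τ : ℝ} (hτ0 : 0 < τ) (hτT : τ ≤ T)
    (hui : IntegrableOn u (Icc 0 T))
    (hcon : ∀ t ∈ Icc (0:ℝ) T, (∫ s in (0:ℝ)..t, u s) ≤ α + a * t) :
    (∫ s in Ioc (0:ℝ) τ, (∫ t in Ioc (0:ℝ) s, u t)) ≤ α * τ + a * τ^2/2 := by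
  have hmono : (∫ s in Ioc (0:ℝ) τ, (∫ t in Ioc (0:ℝ) s, u t))
      ≤ ∫ s in Ioc (0:ℝ) τ, (α + a * s) := by
    refine setIntegral_mono_on (sclp_prim_int hτ0 hτT hui)
      ((continuous_const.add (continuous_const.mul continuous_id)).integrableOn_Ioc)
      measurableSet_Ioc fun s hs => ?_
    have := hcon s ⟨hs.1.le, hs.2.trans hτT⟩
    rwa [intervalIntegral.integral_of_le hs.1.le] at this
  have hlin : ∫ s in Ioc (0:ℝ) τ, (α + a * s) = α * τ + a * τ^2/2 := by
    have : ∀ s : ℝ, α + a * s = α - (-a) * s := fun s => by ring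
    simp_rw [this]
    rw [sclp_integral_linear α (-a) 0 τ hτ0.le]
    ring
  linarith

lemma sclp_ind_intOn {k β p q : ℝ} :
    IntegrableOn (fun t => (Iic β).indicator (fun _ => k) t) (Ioc p q) :=
  (integrableOn_const measure_Ioc_lt_top.ne).indicator measurableSet_Iic

lemma sclp_ind_prim (k β t : ℝ) (hβ : 0 ≤ β) (ht : 0 ≤ t) :
    ∫ s in (0:ℝ)..t, (Iic β).indicator (fun _ => k) s = k * min t β := by
  rw [intervalIntegral.integral_of_le ht, integral_indicator_const _ measurableSet_Iic,
    measureReal_restrict_apply measurableSet_Iic, inter_comm, Ioc_inter_Iic,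
    Real.volume_real_Ioc_of_le (le_min ht hβ), smul_eq_mul]
  ring

lemma sclp_val_ind {γ c T k β : ℝ} (hβ0 : 0 ≤ β) (hβT : β ≤ T) :
    ∫ t in (0:ℝ)..T, (γ + (T - t)*c) * ((Iic β).indicator (fun _ => k) t)
      = k*((γ + T*c)*β - c*β^2/2) := by
  rw [intervalIntegral.integral_of_le (hβ0.trans hβT)]
  have h1 : ∀ t, (γ + (T - t)*c) * ((Iic β).indicator (fun _ => k) t)
      = (Iic β).indicator (fun s => (k*(γ + T*c)) - (k*c)*s) t := by
    intro t; by_cases h : t ∈ Iic β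
    · rw [indicator_of_mem h, indicator_of_mem h]; ring
    · rw [indicator_of_notMem h, indicator_of_notMem h, mul_zero]
  simp_rw [h1]
  rw [integral_indicator measurableSet_Iic, Measure.restrict_restrict measurableSet_Iic,
    show Iic β ∩ Ioc 0 T = Ioc 0 β by rw [inter_comm, Ioc_inter_Iic, min_eq_right hβT],
    sclp_integral_linear (k*(γ + T*c)) (k*c) 0 β hβ0]
  ring

lemma sclp_approx {α a γ c T τ ε : ℝ} (hα : 0 < α) (ha : 0 < a) (hc : 0 < c)
    (hτ : τ = T + γ/c) (hτ0 : 0 < τ) (hτT : τ ≤ T) (hε0 : 0 < ε) (hετ : ε ≤ τ) :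
    (c*(α*τ + a*τ^2/2) - c*α*ε/2) ∈ sclpValues α a γ c T := by
  set u : ℝ → ℝ := fun t =>
    (Iic ε).indicator (fun _ => α/ε) t + (Iic τ).indicator (fun _ => a) t with hu
  have hint1 : ∀ t : ℝ, IntervalIntegrable (fun s => (Iic ε).indicator (fun _ => α/ε) s)
      volume 0 t ∧ IntervalIntegrable (fun s => (Iic τ).indicator (fun _ => a) s) volume 0 t := by
    intro t
    constructor <;> exact (intervalIntegrable_iff).mpr (sclp_ind_intOn.mono_set Ioc_subset_uIoc')
  have hprim : ∀ t : ℝ, 0 ≤ t → ∫ s in (0:ℝ)..t, u s = (α/ε) * min t ε + a * min t τ := by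
    intro t ht
    rw [hu, intervalIntegral.integral_add (hint1 t).1 (hint1 t).2,
      sclp_ind_prim _ _ _ hε0.le ht, sclp_ind_prim _ _ _ hτ0.le ht]
  refine ⟨u, ?_, ?_, ?_, ?_⟩
  · exact ((integrableOn_const measure_Icc_lt_top.ne).indicator measurableSet_Iic).add
      ((integrableOn_const measure_Icc_lt_top.ne).indicator measurableSet_Iic)
  · intro t _
    have := Set.indicator_nonneg (s := Iic ε) (f := fun _ : ℝ => α/ε)
      (fun _ _ => by positivity) t
    have := Set.indicator_nonneg (s := Iic τ) (f := fun _ : ℝ => a)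
      (fun _ _ => ha.le) t
    simp only [hu]; linarith
  · intro t ht
    rw [hprim t ht.1]
    have h1 : (α/ε) * min t ε ≤ α := by
      calc (α/ε) * min t ε ≤ (α/ε) * ε :=
            mul_le_mul_of_nonneg_left (min_le_right _ _) (by positivity)
        _ = α := by field_simp
    have h2 : a * min t τ ≤ a * t := mul_le_mul_of_nonneg_left (min_le_left _ _) ha.le
    linarith
  · have hval : ∫ t in (0:ℝ)..T, (γ + (T - t) * c) * u t
        = (α/ε)*((γ + T*c)*ε - c*ε^2/2) + a*((γ + T*c)*τ - c*τ^2/2) := by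
      have hsum : ∀ t, (γ + (T - t) * c) * u t
          = (γ + (T - t)*c) * ((Iic ε).indicator (fun _ => α/ε) t)
            + (γ + (T - t)*c) * ((Iic τ).indicator (fun _ => a) t) := by
        intro t; rw [hu]; ring
      simp_rw [hsum]
      have key : ∀ (k β : ℝ), IntervalIntegrable
          (fun t => (γ + (T - t)*c) * ((Iic β).indicator (fun _ => k) t)) volume 0 T := by
        intro k β
        have h1 : (fun t => (γ + (T - t)*c) * ((Iic β).indicator (fun _ => k) t))
            = fun t => (Iic β).indicator (fun s => (k*(γ + T*c)) - (k*c)*s) t := by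
          funext t
          by_cases h : t ∈ Iic β
          · rw [indicator_of_mem h, indicator_of_mem h]; ring
          · rw [indicator_of_notMem h, indicator_of_notMem h, mul_zero]
        rw [h1]
        exact (intervalIntegrable_iff).mpr
          ((((continuous_const.sub (continuous_const.mul continuous_id)).integrableOn_Ioc).indicator
            measurableSet_Iic).mono_set Ioc_subset_uIoc')
      rw [intervalIntegral.integral_add (key _ _) (key _ _), sclp_val_ind hε0.le (hετ.trans hτT),
        sclp_val_ind hτ0.le hτT]
    rw [hval, hτ]
    have hc' : c ≠ 0 := ne_of_gt hc
    have hε' : ε ≠ 0 := ne_of_gt hε0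
    field_simp
    ring

lemma sclp_lin_Ioc {α a τ : ℝ} (hτ0 : 0 ≤ τ) :
    ∫ s in Ioc (0:ℝ) τ, (α + a * s) = α * τ + a * τ^2/2 := by
  have h : ∀ s : ℝ, α + a * s = α - (-a) * s := fun s => by ring
  simp_rw [h]
  rw [sclp_integral_linear α (-a) 0 τ hτ0]
  ring

lemma sclp_not_attained {u : ℝ → ℝ} {α a γ c T τ : ℝ} (hα : 0 < α) (ha : 0 < a) (hc : 0 < c)
    (hτ : τ = T + γ/c) (hτ0 : 0 < τ) (hτT : τ ≤ T)
    (hui : IntegrableOn u (Icc 0 T)) (hu0 : ∀ t ∈ Icc (0:ℝ) T, 0 ≤ u t)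
    (hcon : ∀ t ∈ Icc (0:ℝ) T, (∫ s in (0:ℝ)..t, u s) ≤ α + a * t)
    (hval : c*(α*τ + a*τ^2/2) = ∫ t in (0:ℝ)..T, (γ + (T - t) * c) * u t) :
    False := by
  set U := fun s => ∫ t in Ioc (0:ℝ) s, u t with hU
  have hb := sclp_bound hc hτ hτ0 hτT hui hu0
  have hge : α*τ + a*τ^2/2 ≤ ∫ s in Ioc (0:ℝ) τ, U s := by
    by_contra h
    push_neg at h
    have := mul_lt_mul_of_pos_left h hc
    rw [← hval] at hb
    simp only [hU] at hb this
    linarith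
  -- continuity of U at 0
  have hUcont : ContinuousOn U (Icc 0 τ) :=
    intervalIntegral.continuousOn_primitive (hui.mono_set (Icc_subset_Icc le_rfl hτT))
  have hU0 : U 0 = 0 := by simp [hU]
  have hmem : U ⁻¹' (Iio (α/2)) ∈ nhdsWithin (0:ℝ) (Icc 0 τ) := by
    refine (hUcont 0 ⟨le_rfl, hτ0.le⟩) ?_
    rw [hU0]
    exact Iio_mem_nhds (by positivity)
  obtain ⟨V, hVopen, hV0, hVsub⟩ := mem_nhdsWithin.mp hmem
  obtain ⟨δ', hδ'0, hball⟩ := Metric.isOpen_iff.mp hVopen 0 hV0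
  set δ := min (δ'/2) τ with hδ
  have hδ0 : 0 < δ := lt_min (by linarith) hτ0
  have hδτ : δ ≤ τ := min_le_right _ _
  have hUsmall : ∀ s ∈ Ioc (0:ℝ) δ, U s < α/2 := by
    intro s hs
    have hsV : s ∈ V := by
      apply hball
      rw [Metric.mem_ball, Real.dist_eq, sub_zero, abs_of_pos hs.1]
      calc s ≤ δ := hs.2
        _ ≤ δ'/2 := min_le_left _ _
        _ < δ' := by linarith
    exact hVsub ⟨hsV, ⟨hs.1.le, hs.2.trans hδτ⟩⟩
  -- integrability facts
  have hUint : IntegrableOn U (Ioc 0 τ) := sclp_prim_int hτ0 hτT hui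
  have hlinint : IntegrableOn (fun s => α + a * s) (Ioc (0:ℝ) τ) :=
    (continuous_const.add (continuous_const.mul continuous_id)).integrableOn_Ioc
  have hDint : IntegrableOn (fun s => (α + a * s) - U s) (Ioc (0:ℝ) τ) := hlinint.sub hUint
  have hD1 : IntegrableOn (fun s => (α + a * s) - U s) (Ioc (0:ℝ) δ) :=
    hDint.mono_set (Ioc_subset_Ioc le_rfl hδτ)
  have hD2 : IntegrableOn (fun s => (α + a * s) - U s) (Ioc δ τ) :=
    hDint.mono_set (Ioc_subset_Ioc hδ0.le le_rfl)
  have hDnonneg : ∀ s ∈ Ioc (0:ℝ) τ, 0 ≤ (α + a * s) - U s := by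
    intro s hs
    have := hcon s ⟨hs.1.le, hs.2.trans hτT⟩
    rw [intervalIntegral.integral_of_le hs.1.le] at this
    simp only [hU]
    linarith
  have hkey : ∫ s in Ioc (0:ℝ) τ, ((α + a * s) - U s) ≤ 0 := by
    rw [integral_sub hlinint hUint, sclp_lin_Ioc hτ0.le]
    linarith
  have hsplit : ∫ s in Ioc (0:ℝ) τ, ((α + a * s) - U s)
      = (∫ s in Ioc (0:ℝ) δ, ((α + a * s) - U s)) + ∫ s in Ioc δ τ, ((α + a * s) - U s) := by
    rw [← Ioc_union_Ioc_eq_Ioc hδ0.le hδτ,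
      setIntegral_union (Ioc_disjoint_Ioc_of_le le_rfl) measurableSet_Ioc hD1 hD2]
  have h2 : 0 ≤ ∫ s in Ioc δ τ, ((α + a * s) - U s) :=
    setIntegral_nonneg measurableSet_Ioc fun s hs =>
      hDnonneg s ⟨hδ0.trans hs.1, hs.2⟩
  have h1 : δ * (α/2) ≤ ∫ s in Ioc (0:ℝ) δ, ((α + a * s) - U s) := by
    have hconst : ∫ _ in Ioc (0:ℝ) δ, (α/2) = δ * (α/2) := by
      rw [setIntegral_const, Real.volume_real_Ioc_of_le (hδ0.le : (0:ℝ) ≤ δ), smul_eq_mul,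
        sub_zero]
    rw [← hconst]
    refine setIntegral_mono_on (integrableOn_const measure_Ioc_lt_top.ne) hD1
      measurableSet_Ioc fun s hs => ?_
    have hs' : s ∈ Ioc (0:ℝ) τ := ⟨hs.1, hs.2.trans hδτ⟩
    have hUs := hUsmall s hs
    have : 0 ≤ a * s := mul_nonneg ha.le hs.1.le
    linarith
  have : 0 < δ * (α/2) := by positivity
  linarith

lemma sclp_mclp_mem {α a γ c T τ : ℝ} (hα : 0 < α) (ha : 0 < a) (hc : 0 < c)
    (hτ : τ = T + γ/c) (hτ0 : 0 < τ) (hτT : τ ≤ T) :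
    (α*(γ + T*c) + a*((γ + T*c)*τ - c*τ^2/2)) ∈ mclpValues α a γ c T := by
  have hT0 : (0:ℝ) ≤ T := hτ0.le.trans hτT
  set Ufun : ℝ → ℝ := fun t => if t < 0 then 0 else α + a * min t τ with hUfun
  have hmono : Monotone Ufun := by
    intro x y hxy
    simp only [hUfun]
    split_ifs with h1 h2 h2
    · exact le_rfl
    · exact add_nonneg hα.le (mul_nonneg ha.le (le_min (not_lt.mp h2) hτ0.le))
    · linarith [not_lt.mp h1, h2]
    · have hmin : min x τ ≤ min y τ := min_le_min hxy le_rfl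
      nlinarith
  have hrc : ∀ x, ContinuousWithinAt Ufun (Ici x) x := by
    intro x
    by_cases hx : x < 0
    · have hev : Ufun =ᶠ[nhds x] fun _ => 0 :=
        Filter.eventually_of_mem (Iio_mem_nhds hx) fun y hy => if_pos hy
      exact ((continuousAt_const (y := (0:ℝ))).congr hev.symm).continuousWithinAt
    · push_neg at hx
      have hg : ContinuousWithinAt (fun t => α + a * min t τ) (Ici x) x :=
        ((continuous_const.add (continuous_const.mul
          (continuous_id.min continuous_const))).continuousAt).continuousWithinAt
      refine hg.congr (fun y hy => if_neg (not_lt.mpr (hx.trans hy))) (if_neg (not_lt.mpr hx))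
  set U : StieltjesFunction ℝ := ⟨Ufun, hmono, hrc⟩ with hUdef
  have hmeas : U.measure = (ENNReal.ofReal α) • Measure.dirac (0:ℝ)
      + (ENNReal.ofReal a) • volume.restrict (Ioc 0 τ) := by
    refine Measure.ext_of_Ioc _ _ fun p q hpq => ?_
    rw [StieltjesFunction.measure_Ioc]
    have hUval : ∀ r : ℝ, U r = if r < 0 then 0 else α + a * min r τ := fun r => rfl
    simp only [Measure.coe_add, Measure.coe_smul, Pi.add_apply, Pi.smul_apply, smul_eq_mul,
      Measure.restrict_apply measurableSet_Ioc,
      Measure.dirac_apply' _ measurableSet_Ioc, hUfun, hUval]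
    rcases lt_or_ge q 0 with hq | hq
    · rw [if_pos hq, if_pos (hpq.trans hq)]
      have he : Ioc p q ∩ Ioc 0 τ = ∅ := by
        apply eq_empty_of_forall_notMem
        rintro x ⟨hx1, hx2⟩
        exact absurd (hx2.1.trans_le hx1.2) (not_lt.mpr hq.le)
      have h0 : (0:ℝ) ∉ Ioc p q := fun h => absurd h.2 (not_le.mpr hq)
      rw [he, indicator_of_notMem h0]
      simp
    · rcases lt_or_ge p 0 with hp | hp
      · rw [if_neg (not_lt.mpr hq), if_pos hp, sub_zero]
        have h0 : (0:ℝ) ∈ Ioc p q := ⟨hp, hq⟩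
        rw [indicator_of_mem h0, Ioc_inter_Ioc, max_eq_right hp.le, Real.volume_Ioc]
        have hmin0 : 0 ≤ min q τ := le_min hq hτ0.le
        rw [Pi.one_apply, mul_one, sub_zero, ← ENNReal.ofReal_mul ha.le,
          ← ENNReal.ofReal_add hα.le (mul_nonneg ha.le hmin0)]
      · rw [if_neg (not_lt.mpr hq), if_neg (not_lt.mpr hp)]
        have h0 : (0:ℝ) ∉ Ioc p q := fun h => absurd h.1 (not_lt.mpr hp)
        rw [indicator_of_notMem h0, Ioc_inter_Ioc, max_eq_left hp, Real.volume_Ioc,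
          ← ENNReal.ofReal_mul ha.le]
        rcases le_or_gt p τ with hpτ | hpτ
        · rw [min_eq_left hpτ]
          ring_nf
        · rw [min_eq_right hpτ.le, min_eq_right (hpτ.trans hpq).le]
          rw [sub_self, ENNReal.ofReal_zero,
            ENNReal.ofReal_eq_zero.mpr
              (mul_nonpos_of_nonneg_of_nonpos ha.le (by linarith : τ - p ≤ 0))]
          simp
  refine ⟨U, fun t ht => if_pos ht, fun t ht => ?_, ?_⟩
  · show (if t < 0 then 0 else α + a * min t τ) ≤ α + a * t
    rw [if_neg (not_lt.mpr ht.1)]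
    have : min t τ ≤ t := min_le_left _ _
    nlinarith
  · have hIoc_sub : Ioc (0:ℝ) τ ⊆ Icc 0 T := fun x hx => ⟨hx.1.le, hx.2.trans hτT⟩
    rw [hmeas, Measure.restrict_add, Measure.restrict_smul, Measure.restrict_smul,
      Measure.restrict_restrict measurableSet_Icc, inter_eq_right.mpr hIoc_sub]
    have hd : (Measure.dirac (0:ℝ)).restrict (Icc 0 T) = Measure.dirac 0 := by
      classical
      rw [MeasureTheory.restrict_dirac]
      simp [hT0]
    rw [hd]
    have hint1 : Integrable (fun t => γ + (T - t) * c)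
        ((ENNReal.ofReal α) • Measure.dirac (0:ℝ)) := by
      refine Integrable.smul_measure ?_ ENNReal.ofReal_ne_top
      refine ⟨((continuous_const.add ((continuous_const.sub continuous_id).mul
        continuous_const)).stronglyMeasurable).aestronglyMeasurable, ?_⟩
      rw [HasFiniteIntegral, lintegral_dirac]
      exact ENNReal.coe_lt_top
    have hint2 : Integrable (fun t => γ + (T - t) * c)
        ((ENNReal.ofReal a) • volume.restrict (Ioc (0:ℝ) τ)) := by
      refine Integrable.smul_measure ?_ ENNReal.ofReal_ne_top
      exact (continuous_const.add ((continuous_const.sub continuous_id).mul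
        continuous_const)).integrableOn_Ioc
    rw [integral_add_measure hint1 hint2, integral_smul_measure, integral_smul_measure,
      integral_dirac, ENNReal.toReal_ofReal hα.le, ENNReal.toReal_ofReal ha.le,
      smul_eq_mul, smul_eq_mul]
    have hlin : ∫ t in Ioc (0:ℝ) τ, (γ + (T - t) * c)
        = (γ + T*c)*τ - c*τ^2/2 := by
      have h : ∀ t : ℝ, γ + (T - t) * c = (γ + T*c) - c*t := fun t => by ring
      simp_rw [h]
      rw [sclp_integral_linear (γ + T*c) c 0 τ hτ0.le]
      ring
    rw [hlin]
    ring

/-- Scalar SCLP with α > 0, a > 0, γ < 0, c > 0 and T > -γ/c: the supremum of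
the SCLP objective equals α(γ+cT) + acT²/2 + aγ(T+γ/(2c)); it is attained by
the M-CLP extension but by no SCLP (absolutely continuous) solution. -/
theorem sclp_case2_sup_not_attained (α a γ c T : ℝ)
    (hα : 0 < α) (ha : 0 < a) (hγ : γ < 0) (hc : 0 < c) (hT : -γ / c < T) :
    sSup (sclpValues α a γ c T)
        = α * (γ + c * T) + a * c * T ^ 2 / 2 + a * γ * (T + γ / (2 * c)) ∧
    (α * (γ + c * T) + a * c * T ^ 2 / 2 + a * γ * (T + γ / (2 * c)))
        ∉ sclpValues α a γ c T ∧
    (α * (γ + c * T) + a * c * T ^ 2 / 2 + a * γ * (T + γ / (2 * c)))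
        ∈ mclpValues α a γ c T := by
  set τ : ℝ := T + γ/c with hτ
  have hτ0 : 0 < τ := by
    have h1 : -(γ/c) < T := by rwa [neg_div] at hT
    rw [hτ]; linarith
  have hτT : τ ≤ T := by
    have : γ/c < 0 := div_neg_of_neg_of_pos hγ hc
    rw [hτ]; linarith
  have hMeq : α * (γ + c * T) + a * c * T ^ 2 / 2 + a * γ * (T + γ / (2 * c))
      = c*(α*τ + a*τ^2/2) := by
    rw [hτ]; field_simp; ring
  have hub : ∀ z ∈ sclpValues α a γ c T, z ≤ c*(α*τ + a*τ^2/2) := by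
    rintro z ⟨u, hui, hu0, hcon, rfl⟩
    calc ∫ t in (0:ℝ)..T, (γ + (T - t) * c) * u t
        ≤ c * ∫ s in Ioc (0:ℝ) τ, (∫ t in Ioc (0:ℝ) s, u t) :=
          sclp_bound hc hτ hτ0 hτT hui hu0
      _ ≤ c * (α*τ + a*τ^2/2) :=
          mul_le_mul_of_nonneg_left (sclp_prim_bound hτ0 hτT hui hcon) hc.le
  have hne : (sclpValues α a γ c T).Nonempty := by
    refine ⟨0, fun _ => (0:ℝ), integrableOn_zero, fun t _ => le_rfl, fun t ht => ?_, by simp⟩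
    simp only [intervalIntegral.integral_zero]
    exact add_nonneg hα.le (mul_nonneg ha.le ht.1)
  have hbdd : BddAbove (sclpValues α a γ c T) := ⟨_, fun z hz => hub z hz⟩
  have hsup : sSup (sclpValues α a γ c T) = c*(α*τ + a*τ^2/2) := by
    apply le_antisymm (csSup_le hne hub)
    by_contra hlt
    push_neg at hlt
    set S := sSup (sclpValues α a γ c T) with hS
    set d := c*(α*τ + a*τ^2/2) - S with hd
    have hd0 : 0 < d := by rw [hd]; linarith
    set ε := min τ (d/(c*α)) with hε
    have hε0 : 0 < ε := lt_min hτ0 (by positivity)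
    have hmem := sclp_approx hα ha hc hτ hτ0 hτT hε0 (min_le_left _ _)
    have hle := le_csSup hbdd hmem
    have h1 : ε*(c*α) ≤ d := (le_div_iff₀ (by positivity)).mp (min_le_right _ _)
    rw [← hS] at hle
    have h2 : c*α*ε = ε*(c*α) := by ring
    clear_value ε d S
    linarith
  refine ⟨by rw [hMeq]; exact hsup, ?_, ?_⟩
  · rw [hMeq]
    rintro ⟨u, hui, hu0, hcon, hval⟩
    exact sclp_not_attained hα ha hc hτ hτ0 hτT hui hu0 hcon hval
  · rw [hMeq]
    have hm := sclp_mclp_mem hα ha hc hτ hτ0 hτT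
    have halg : α*(γ + T*c) + a*((γ + T*c)*τ - c*τ^2/2) = c*(α*τ + a*τ^2/2) := by
      rw [hτ]; field_simp; ring
    rwa [halg] at hm
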